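/- Let n ≥ 1, let T be an n×n real row-stochastic matrix, let p ∈ (0,1), and let ε be a real number with 0 ≤ ε < p and 1 − p + ε < 1 (i.e. ε < p). Then the series p·(p+ε)·T + p·(p−ε)·(1−p−ε)·∑_{m=2}^{∞} (1−p+ε)^{m−2}·T^m converges in the matrix norm, and its sum equals T · p·(p+ε) · ( I + ((p−ε)/(p+ε)) · ((1−p−ε)/(1−p+ε)) · ( (I − (1−p+ε)·T)⁻¹ − I ) ). (This is the un-normalized observed-chain transition matrix when the omission process is a two-state Markov chain with stay bias ε instead of i.i.d. Bernoulli omissions.) -/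

import Mathlib

/-- Let `T` be an `n × n` real row-stochastic matrix, `p ∈ (0,1)`,
and `ε` real with `0 ≤ ε < p` (so that `1 - p + ε < 1`).  Then the series
`p(p+ε) • T + p(p-ε)(1-p-ε) • ∑_{m=2}^∞ (1-p+ε)^{m-2} • T^m` converges (in the matrix
norm), with sum
`T * (p(p+ε) • (I + ((p-ε)/(p+ε)) ((1-p-ε)/(1-p+ε)) • ((I - (1-p+ε) • T)⁻¹ - I)))`.
Below the tail `∑_{m=2}^∞` is reindexed by `m ↦ m + 2`, and the `HasSum` statement
asserts that the tail sums to the total minus the leading term `p(p+ε) • T`. -/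
theorem stmt15 (n : ℕ) (hn : 1 ≤ n) (T : Matrix (Fin n) (Fin n) ℝ)
    (hTnonneg : ∀ i j, 0 ≤ T i j) (hTrow : ∀ i, ∑ j, T i j = 1)
    (p : ℝ) (hp0 : 0 < p) (hp1 : p < 1)
    (ε : ℝ) (hε0 : 0 ≤ ε) (hεp : ε < p) :
    HasSum
      (fun m : ℕ => (p * (p - ε) * (1 - p - ε) * (1 - p + ε) ^ m) • T ^ (m + 2))
      ((p * (p + ε)) •
          (T * (1 + (((p - ε) / (p + ε)) * ((1 - p - ε) / (1 - p + ε))) •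
              ((1 - (1 - p + ε) • T)⁻¹ - 1)))
        - (p * (p + ε)) • T) := by
  haveI : Nonempty (Fin n) := Fin.pos_iff_nonempty.mp hn
  letI : NormedRing (Matrix (Fin n) (Fin n) ℝ) := Matrix.linftyOpNormedRing
  letI : NormedAlgebra ℝ (Matrix (Fin n) (Fin n) ℝ) := Matrix.linftyOpNormedAlgebra
  haveI : HasSummableGeomSeries (Matrix (Fin n) (Fin n) ℝ) := by infer_instance
  set r : ℝ := 1 - p + ε with hr
  have hr0 : 0 < r := by dsimp [r]; linarith
  have hr1 : r < 1 := by dsimp [r]; linarith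
  -- norm of T is 1
  have hTnorm : ‖T‖ = 1 := by
    rw [Matrix.linfty_opNorm_def]
    have h1 : ∀ i : Fin n, (∑ j, ‖T i j‖₊ : NNReal) = 1 := by
      intro i
      have : ((∑ j, ‖T i j‖₊ : NNReal) : ℝ) = 1 := by
        push_cast
        rw [← hTrow i]
        exact Finset.sum_congr rfl fun j _ => abs_of_nonneg (hTnonneg i j)
      exact_mod_cast this
    have : (Finset.univ.sup fun i : Fin n => ∑ j, ‖T i j‖₊) = 1 := by
      apply le_antisymm
      · exact Finset.sup_le fun i _ => (h1 i).le
      · obtain ⟨i⟩ := ‹Nonempty (Fin n)›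
        exact (h1 i).ge.trans (Finset.le_sup (f := fun i : Fin n => ∑ j, ‖T i j‖₊) (Finset.mem_univ i))
    rw [this]; norm_num
  set x : Matrix (Fin n) (Fin n) ℝ := r • T with hxdef
  have hx : ‖x‖ < 1 := by
    rw [hxdef, norm_smul, hTnorm, mul_one, Real.norm_eq_abs, abs_of_pos hr0]
    exact hr1
  have hgeo : HasSum (fun i : ℕ => x ^ i) (Ring.inverse (1 - x)) :=
    hasSum_geom_series_inverse x hx
  have hUnit : IsUnit (1 - x) := isUnit_one_sub_of_norm_lt_one hx
  set Rinv : Matrix (Fin n) (Fin n) ℝ := Ring.inverse (1 - x) with hRinv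
  have hinv_eq : (1 - x)⁻¹ = Rinv := Matrix.nonsing_inv_eq_ringInverse _
  set c : ℝ := p * (p - ε) * (1 - p - ε) with hc
  have h2 : HasSum (fun m : ℕ => c • (T ^ 2 * x ^ m)) (c • (T ^ 2 * Rinv)) :=
    (hgeo.mul_left (T ^ 2)).const_smul c
  have hfun : (fun m : ℕ => (p * (p - ε) * (1 - p - ε) * (1 - p + ε) ^ m) • T ^ (m + 2))
      = fun m : ℕ => c • (T ^ 2 * x ^ m) := by
    funext m
    rw [hxdef, smul_pow, Matrix.mul_smul, smul_smul, ← pow_add]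
    rw [hc, hr]
    ring_nf
  -- RHS equality
  have hcancel : (1 - x) * Rinv = 1 := Ring.mul_inverse_cancel _ hUnit
  have hkey : Rinv - 1 = r • (T * Rinv) := by
    have : Rinv - 1 = Rinv - (1 - x) * Rinv := by rw [hcancel]
    rw [this, hxdef]
    rw [sub_mul, one_mul, sub_sub_cancel, Matrix.smul_mul]
  have hpe : p + ε ≠ 0 := by positivity
  have hrne : r ≠ 0 := ne_of_gt hr0
  have hRHS : (p * (p + ε)) •
          (T * (1 + (((p - ε) / (p + ε)) * ((1 - p - ε) / (1 - p + ε))) •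
              ((1 - (1 - p + ε) • T)⁻¹ - 1)))
        - (p * (p + ε)) • T = c • (T ^ 2 * Rinv) := by
    have hxr : (1 - p + ε) • T = x := by rw [hxdef]
    rw [hxr, hinv_eq, hkey]
    set k : ℝ := ((p - ε) / (p + ε)) * ((1 - p - ε) / (1 - p + ε)) with hk
    rw [Matrix.mul_add, Matrix.mul_one, Matrix.mul_smul, smul_add, add_sub_cancel_left,
      smul_smul]
    rw [Matrix.mul_smul, smul_smul, ← Matrix.mul_assoc, ← pow_two]
    congr 1
    rw [hk, hc, hr]
    have hr' : (1 - p + ε) ≠ 0 := hrne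
    field_simp
  rw [hfun, hRHS]
  exact h2
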